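/- Let ξ : ℤ → {0,1} be a non-periodic Toeplitz sequence with period structure (p_ℓ)_{ℓ≥1}, Ω the associated odometer, and U, V, W = cl(U) the sets constructed from ξ. Then the topological boundary of W satisfies ∂W = Ω \ (U ∪ V). -/

import Mathlib

open MeasureTheory Set Filter Topology

noncomputable section

instance (n : ℕ) : TopologicalSpace (ZMod n) := ⊥
instance (n : ℕ) : DiscreteTopology (ZMod n) := ⟨rfl⟩
instance (n : ℕ) : MeasurableSpace (ZMod n) := ⊤

/-- The `p`-skeleton of a sequence `ξ : ℤ → {0,1}`:
the set of `p`-periodic positions of `ξ`. -/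
def Per (ξ : ℤ → Fin 2) (p : ℕ) : Set ℤ := {k | ∀ n : ℤ, ξ (k + n * p) = ξ k}

/-- The density `D(p)` of the `p`-skeleton:
`D(p) = #(Per(p,ξ) ∩ [0, p-1]) / p`. -/
def skelDensity (ξ : ℤ → Fin 2) (p : ℕ) : ℝ :=
  ((Per ξ p ∩ Set.Ico (0 : ℤ) (p : ℤ)).ncard : ℝ) / p

/-- `ξ` is a Toeplitz sequence: every position is periodic for some period `p ≥ 1`. -/
def IsToeplitz (ξ : ℤ → Fin 2) : Prop := ∀ k : ℤ, ∃ p : ℕ, 0 < p ∧ k ∈ Per ξ p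

/-- `ξ` is non-periodic: no `p ≥ 1` is a period of the whole sequence. -/
def IsNonPeriodic (ξ : ℤ → Fin 2) : Prop := ∀ p : ℕ, 0 < p → ∃ k : ℤ, ξ (k + p) ≠ ξ k

/-- `(p ℓ)` is a period structure for `ξ`: the `p ℓ` are positive, each divides the
next, and the `p ℓ`-skeletons exhaust `ℤ`. -/
def IsPeriodStructure (ξ : ℤ → Fin 2) (p : ℕ → ℕ) : Prop :=
  (∀ ℓ, 0 < p ℓ) ∧ (∀ ℓ, p ℓ ∣ p (ℓ + 1)) ∧ ∀ k : ℤ, ∃ ℓ, k ∈ Per ξ (p ℓ)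

/-- The odometer associated with a scale `p`, i.e. the closed subgroup of
`∏ ℓ, ℤ/p ℓ ℤ` of sequences compatible under the canonical projections
(whenever `p ℓ ∣ p (ℓ+1)`, which holds for period structures). -/
def odometer (p : ℕ → ℕ) : AddSubgroup (Π ℓ, ZMod (p ℓ)) where
  carrier := {x | ∀ ℓ, ∀ h : p ℓ ∣ p (ℓ + 1), ZMod.castHom h (ZMod (p ℓ)) (x (ℓ + 1)) = x ℓ}
  zero_mem' := by intro ℓ _; simp
  add_mem' := by intro a b ha hb ℓ h; simp only [Pi.add_apply, map_add, ha ℓ h, hb ℓ h]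
  neg_mem' := by intro a ha ℓ h; simp only [Pi.neg_apply, map_neg, ha ℓ h]

/-- The distinguished element `e` of the odometer, whose `ℓ`-th coordinate is
`1 mod p ℓ`; its `n`-th multiple `n • e` has `ℓ`-th coordinate `n mod p ℓ`. -/
def odometerGen (p : ℕ → ℕ) : odometer p := ⟨fun _ => 1, fun _ _ => map_one _⟩

/-- `A_s(ℓ) = {k mod p ℓ : k ∈ Per (p ℓ, ξ), ξ k = s} ⊆ ℤ/p ℓ ℤ`. -/
def Aset (ξ : ℤ → Fin 2) (p : ℕ → ℕ) (ℓ : ℕ) (s : Fin 2) : Set (ZMod (p ℓ)) :=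
  {c | ∃ k : ℤ, k ∈ Per ξ (p ℓ) ∧ ξ k = s ∧ (k : ZMod (p ℓ)) = c}

/-- `U_ℓ = {x ∈ Ω : x ℓ ∈ A_1(ℓ)}`. -/
def UsetL (ξ : ℤ → Fin 2) (p : ℕ → ℕ) (ℓ : ℕ) : Set (odometer p) :=
  {x | (x : Π ℓ, ZMod (p ℓ)) ℓ ∈ Aset ξ p ℓ 1}

/-- `V_ℓ = {x ∈ Ω : x ℓ ∈ A_0(ℓ)}`. -/
def VsetL (ξ : ℤ → Fin 2) (p : ℕ → ℕ) (ℓ : ℕ) : Set (odometer p) :=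
  {x | (x : Π ℓ, ZMod (p ℓ)) ℓ ∈ Aset ξ p ℓ 0}

/-- `U = ⋃ ℓ, U_ℓ`. -/
def Uset (ξ : ℤ → Fin 2) (p : ℕ → ℕ) : Set (odometer p) := ⋃ ℓ, UsetL ξ p ℓ

/-- `V = ⋃ ℓ, V_ℓ`. -/
def Vset (ξ : ℤ → Fin 2) (p : ℕ → ℕ) : Set (odometer p) := ⋃ ℓ, VsetL ξ p ℓ

/-- The window `W = cl(U)` constructed from `ξ`. -/
def Wset (ξ : ℤ → Fin 2) (p : ℕ → ℕ) : Set (odometer p) := closure (Uset ξ p)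


section Aux

variable (ξ : ℤ → Fin 2) (p : ℕ → ℕ)

lemma per_of_dvd {q r : ℕ} (h : q ∣ r) {k : ℤ} (hk : k ∈ Per ξ q) : k ∈ Per ξ r := by
  obtain ⟨c, rfl⟩ := h
  intro n
  have := hk (n * c)
  convert this using 3
  push_cast
  ring

lemma per_shift {q : ℕ} {k : ℤ} (hk : k ∈ Per ξ q) (n : ℤ) : ξ (k + n * q) = ξ k := hk n

lemma pmono (hd : ∀ j, p j ∣ p (j + 1)) : ∀ {a b : ℕ}, a ≤ b → p a ∣ p b := by
  intro a b h
  induction b, h using Nat.le_induction with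
  | base => exact dvd_rfl
  | succ b hb ih => exact ih.trans (hd b)

/-- The group element whose `j`-th coordinate is `k mod p j`. -/
def orb (k : ℤ) : odometer p :=
  ⟨fun j => (k : ZMod (p j)), fun j h => map_intCast (ZMod.castHom h (ZMod (p j))) k⟩

lemma agree (hd : ∀ j, p j ∣ p (j + 1)) (x y : odometer p) :
    ∀ j, (x : Π j, ZMod (p j)) j = (y : Π j, ZMod (p j)) j →
      ∀ i, i ≤ j → (x : Π j, ZMod (p j)) i = (y : Π j, ZMod (p j)) i := by
  intro j
  induction j with
  | zero =>
    intro h i hi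
    obtain rfl := Nat.le_zero.mp hi
    exact h
  | succ j ih =>
    intro h i hi
    rcases eq_or_lt_of_le hi with rfl | hlt
    · exact h
    · have hx := x.2 j (hd j)
      have hy := y.2 j (hd j)
      have hj : (x : Π j, ZMod (p j)) j = (y : Π j, ZMod (p j)) j := by
        rw [← hx, ← hy, h]
      exact ih hj i (Nat.lt_succ_iff.mp hlt)

lemma fin2_cases : ∀ a : Fin 2, a = 0 ∨ a = 1 := by decide

lemma fin2_eq_of_ne : ∀ s a b : Fin 2, a ≠ s → b ≠ s → a = b := by decide

/-- Key claim: if `x ∉ U ∪ V` then for every level `ℓ` and each symbol `s`, there is an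
integer `k` congruent to `x ℓ` mod `p ℓ`, lying in some skeleton at a level `m ≥ ℓ`,
with `ξ k = s`. -/
lemma key (hps : IsPeriodStructure ξ p) (x : odometer p)
    (hU : x ∉ Uset ξ p) (hV : x ∉ Vset ξ p) (s : Fin 2) (ℓ : ℕ) :
    ∃ (k : ℤ) (m : ℕ), ℓ ≤ m ∧ k ∈ Per ξ (p m) ∧ ξ k = s ∧
      ((k : ZMod (p ℓ)) = (x : Π j, ZMod (p j)) ℓ) := by
  obtain ⟨hpos, hd, hcov⟩ := hps
  obtain ⟨k₀, hk₀⟩ := ZMod.intCast_surjective ((x : Π j, ZMod (p j)) ℓ)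
  by_cases hex : ∃ n : ℤ, ξ (k₀ + n * p ℓ) = s
  · obtain ⟨n, hn⟩ := hex
    obtain ⟨m₀, hm₀⟩ := hcov (k₀ + n * p ℓ)
    refine ⟨k₀ + n * p ℓ, max ℓ m₀, le_max_left _ _,
      per_of_dvd ξ (pmono p hd (le_max_right _ _)) hm₀, hn, ?_⟩
    have h0 : ((p ℓ : ℕ) : ZMod (p ℓ)) = 0 := ZMod.natCast_self _
    push_cast
    rw [h0, mul_zero, add_zero, hk₀]
  · exfalso
    push_neg at hex
    have hk0s : ξ k₀ ≠ s := by
      have := hex 0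
      simpa using this
    have hper : k₀ ∈ Per ξ (p ℓ) := fun n => fin2_eq_of_ne s _ _ (hex n) hk0s
    have hA : (x : Π j, ZMod (p j)) ℓ ∈ Aset ξ p ℓ (ξ k₀) := ⟨k₀, hper, rfl, hk₀⟩
    rcases fin2_cases (ξ k₀) with h0 | h1
    · exact hV (Set.mem_iUnion.mpr ⟨ℓ, by rw [h0] at hA; exact hA⟩)
    · exact hU (Set.mem_iUnion.mpr ⟨ℓ, by rw [h1] at hA; exact hA⟩)

lemma mem_closure_gen (hps : IsPeriodStructure ξ p) (x : odometer p)
    (hU : x ∉ Uset ξ p) (hV : x ∉ Vset ξ p) (s : Fin 2) :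
    x ∈ closure (⋃ m, {y : odometer p | (y : Π j, ZMod (p j)) m ∈ Aset ξ p m s}) := by
  rw [mem_closure_iff]
  intro o ho hxo
  obtain ⟨t, ht, rfl⟩ := isOpen_induced_iff.mp ho
  obtain ⟨I, u, hu, hsub⟩ := isOpen_pi_iff.mp ht _ hxo
  set L := I.sup id with hL
  obtain ⟨k, m, hLm, hkPer, hks, hkcast⟩ := key ξ p hps x hU hV s L
  set y : odometer p := orb p k with hy
  have hyL : (y : Π j, ZMod (p j)) L = (x : Π j, ZMod (p j)) L := hkcast
  refine ⟨y, ?_, Set.mem_iUnion.mpr ⟨m, ⟨k, hkPer, hks, rfl⟩⟩⟩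
  apply hsub
  intro i hi
  have hiL : i ≤ L := Finset.le_sup (f := id) hi
  have := agree p hps.2.1 y x L hyL i hiL
  rw [this]
  exact (hu i hi).2

lemma UV_disj (hps : IsPeriodStructure ξ p) : Uset ξ p ∩ Vset ξ p = ∅ := by
  ext x
  simp only [Set.mem_inter_iff, Set.mem_empty_iff_false, iff_false, not_and]
  intro hxU hxV
  obtain ⟨ℓ, k₁, hk₁P, hk₁1, hk₁c⟩ := Set.mem_iUnion.mp hxU
  obtain ⟨m, k₀, hk₀P, hk₀0, hk₀c⟩ := Set.mem_iUnion.mp hxV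
  set L := max ℓ m with hLdef
  obtain ⟨k, hk⟩ := ZMod.intCast_surjective ((x : Π j, ZMod (p j)) L)
  have hagree := agree p hps.2.1 (orb p k) x L hk
  have hℓ : (k : ZMod (p ℓ)) = (x : Π j, ZMod (p j)) ℓ := hagree ℓ (le_max_left _ _)
  have hm : (k : ZMod (p m)) = (x : Π j, ZMod (p j)) m := hagree m (le_max_right _ _)
  haveI : NeZero (p ℓ) := ⟨(hps.1 ℓ).ne'⟩
  haveI : NeZero (p m) := ⟨(hps.1 m).ne'⟩
  have hd1 : ((p ℓ : ℤ)) ∣ (k - k₁) := by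
    rw [← ZMod.intCast_zmod_eq_zero_iff_dvd]
    push_cast
    rw [hℓ, hk₁c, sub_self]
  have hd0 : ((p m : ℤ)) ∣ (k - k₀) := by
    rw [← ZMod.intCast_zmod_eq_zero_iff_dvd]
    push_cast
    rw [hm, hk₀c, sub_self]
  obtain ⟨c₁, hc₁⟩ := hd1
  obtain ⟨c₀, hc₀⟩ := hd0
  have e1 : ξ k = 1 := by
    have : k = k₁ + c₁ * p ℓ := by linarith [hc₁]
    rw [this, per_shift ξ hk₁P c₁, hk₁1]
  have e0 : ξ k = 0 := by
    have : k = k₀ + c₀ * p m := by linarith [hc₀]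
    rw [this, per_shift ξ hk₀P c₀, hk₀0]
  rw [e1] at e0
  exact absurd e0 (by decide)

end Aux

/-- For a non-periodic Toeplitz sequence `ξ` with period structure
`(p ℓ)`, the boundary of the window `W = cl U` satisfies `∂W = Ω \ (U ∪ V)`. -/
theorem toeplitz_frontier_eq (ξ : ℤ → Fin 2) (hT : IsToeplitz ξ)
    (hNP : IsNonPeriodic ξ) (p : ℕ → ℕ) (hps : IsPeriodStructure ξ p) :
    frontier (Wset ξ p) = (Uset ξ p ∪ Vset ξ p)ᶜ := by
  have hd := hps.2.1
  have hUopen : IsOpen (Uset ξ p) :=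
    isOpen_iUnion fun ℓ => IsOpen.preimage
      ((continuous_apply ℓ).comp continuous_subtype_val) (isOpen_discrete _)
  have hVopen : IsOpen (Vset ξ p) :=
    isOpen_iUnion fun ℓ => IsOpen.preimage
      ((continuous_apply ℓ).comp continuous_subtype_val) (isOpen_discrete _)
  have hdisj : Uset ξ p ∩ Vset ξ p = ∅ := UV_disj ξ p hps
  have hVWc : Vset ξ p ⊆ (Wset ξ p)ᶜ := by
    intro x hxV hxW
    have h1 : x ∈ Vset ξ p ∩ closure (Uset ξ p) := ⟨hxV, hxW⟩
    have h2 := hVopen.inter_closure h1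
    rw [Set.inter_comm, hdisj, closure_empty] at h2
    exact h2
  ext x
  constructor
  · intro hx
    rintro (hxU | hxV)
    · exact hx.2 (interior_maximal subset_closure hUopen hxU)
    · have hxW : x ∈ Wset ξ p := by
        have := hx.1
        rw [Wset, closure_closure] at this
        exact this
      exact hVWc hxV hxW
  · intro hx
    have hU : x ∉ Uset ξ p := fun h => hx (Or.inl h)
    have hV : x ∉ Vset ξ p := fun h => hx (Or.inr h)
    have hclU : x ∈ closure (Uset ξ p) := mem_closure_gen ξ p hps x hU hV 1
    have hclV : x ∈ closure (Vset ξ p) := mem_closure_gen ξ p hps x hU hV 0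
    constructor
    · rw [Wset, closure_closure]
      exact hclU
    · intro hint
      obtain ⟨y, hy1, hy2⟩ := mem_closure_iff.mp hclV (interior (Wset ξ p)) isOpen_interior hint
      exact hVWc hy2 (interior_subset hy1)
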